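/- Let K(a_{n,k}) be a Köthe space and Λ₁(β) a nuclear power series space of finite type. Let θ be a sequence with θ_0 ≠ 0. The lower triangular Toeplitz operator T̂_θ : K(a_{n,k}) → Λ₁(β) is compact if and only if θ ∈ Λ₁(β) and there exists m ∈ ℕ such that for every k ∈ ℕ there is C > 0 with e^{-β_n/k} ≤ C a_{n,m} for all n ∈ ℕ. -/

import Mathlib

open scoped BigOperators
noncomputable section

/-- A Köthe matrix: non-negative entries, each row eventually positive,
rows non-decreasing in the second index. -/
structure IsKotheMatrix (a : ℕ → ℕ → ℝ) : Prop where
  nonneg : ∀ n k, 0 ≤ a n k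
  pos : ∀ n, ∃ k, 0 < a n k
  mono : ∀ n k, a n k ≤ a n (k + 1)

/-- Membership in the Köthe space `K(a)`. -/
def InKothe (a : ℕ → ℕ → ℝ) (x : ℕ → ℝ) : Prop :=
  ∀ k, Summable fun n => |x n| * a n k

/-- The `k`-th seminorm of the Köthe space `K(a)`. -/
def kNorm (a : ℕ → ℕ → ℝ) (k : ℕ) (x : ℕ → ℝ) : ℝ :=
  ∑' n, |x n| * a n k

/-- Grothendieck–Pietsch nuclearity criterion for a Köthe space. -/
def IsNuclearKothe (a : ℕ → ℕ → ℝ) : Prop :=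
  ∀ k, ∃ l, k < l ∧ Summable fun n => a n k / a n l

/-- The `n`-th unit vector. -/
def unitVec (n : ℕ) : ℕ → ℝ := fun j => if j = n then 1 else 0

/-- Weight of the finite type power series space `Λ₁(β)`. -/
def finW (β : ℕ → ℝ) (k : ℕ) (n : ℕ) : ℝ := Real.exp (-(β n) / (k : ℝ))

/-- Weight of the infinite type power series space `Λ_∞(β)`. -/
def infW (β : ℕ → ℝ) (k : ℕ) (n : ℕ) : ℝ := Real.exp ((k : ℝ) * β n)

/-- The `k`-th seminorm of `Λ₁(β)` (for `0 < k`). -/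
def finNorm (β : ℕ → ℝ) (k : ℕ) (x : ℕ → ℝ) : ℝ := ∑' n, |x n| * finW β k n

/-- The `k`-th seminorm of `Λ_∞(β)`. -/
def infNorm (β : ℕ → ℝ) (k : ℕ) (x : ℕ → ℝ) : ℝ := ∑' n, |x n| * infW β k n

/-- Membership in `Λ₁(β)`. -/
def memFin (β : ℕ → ℝ) (x : ℕ → ℝ) : Prop :=
  ∀ k : ℕ, 0 < k → Summable fun n => |x n| * finW β k n

/-- Membership in `Λ_∞(β)`. -/
def memInf (β : ℕ → ℝ) (x : ℕ → ℝ) : Prop :=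
  ∀ k : ℕ, 0 < k → Summable fun n => |x n| * infW β k n

/-- Lower triangular Toeplitz operator `T̂_θ`, `T̂_θ e_n = ∑_{j ≥ n} θ_{j-n} e_j`. -/
def hatT (θ : ℕ → ℝ) (x : ℕ → ℝ) : ℕ → ℝ :=
  fun j => ∑ i ∈ Finset.range (j + 1), θ (j - i) * x i

/-- Upper triangular Toeplitz operator `Ť_θ`, `Ť_θ e_n = ∑_{j ≤ n} θ_{n-j} e_j`. -/
def checkT (θ : ℕ → ℝ) (x : ℕ → ℝ) : ℕ → ℝ :=
  fun j => ∑' i, θ i * x (j + i)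

/-- Operator defined by a matrix acting on sequences. -/
def matOp (t : ℕ → ℕ → ℝ) (x : ℕ → ℝ) : ℕ → ℝ :=
  fun j => ∑' n, t j n * x n

/-- The growth condition (3.5): `β_s ≤ M (β_{s-t} + β_t)` for all `s > t`. -/
def GrowthCond (β : ℕ → ℝ) (M : ℕ) : Prop :=
  ∀ t s : ℕ, t < s → β s ≤ (M : ℝ) * (β (s - t) + β t)


lemma unitVec_inKothe (a : ℕ → ℕ → ℝ) (n : ℕ) : InKothe a (unitVec n) := by
  intro k
  apply summable_of_ne_finset_zero (s := {n})
  intro j hj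
  simp only [Finset.mem_singleton] at hj
  simp [unitVec, hj]

lemma stmt4_core (a : ℕ → ℕ → ℝ) (ha : IsKotheMatrix a)
    (β : ℕ → ℝ) (hβ0 : ∀ n, 0 ≤ β n) (hβm : Monotone β)
    (θ : ℕ → ℝ) (hθf : memFin β θ) (m : ℕ)
    (H : ∀ k : ℕ, 0 < k → ∃ C > 0, ∀ n, finW β k n ≤ C * a n m)
    (k : ℕ) (hk : 0 < k) :
    ∃ C > 0, ∀ x, InKothe a x →
      Summable (fun j => |hatT θ x j| * finW β k j) ∧
      finNorm β k (hatT θ x) ≤ C * kNorm a m x := by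
  have hk2 : 0 < 2 * k := by omega
  obtain ⟨C, hC, hCa⟩ := H (2 * k) hk2
  set f : ℕ → ℝ := fun p => |θ p| * finW β (2 * k) p with hf
  have hfs : Summable f := hθf (2 * k) hk2
  have hfnn : ∀ p, 0 ≤ f p := fun p => mul_nonneg (abs_nonneg _) (Real.exp_pos _).le
  have hfnn' : 0 ≤ ∑' p, f p := tsum_nonneg hfnn
  refine ⟨((∑' p, f p) + 1) * C, by nlinarith, fun x hx => ?_⟩
  set g : ℕ → ℝ := fun i => |x i| * finW β (2 * k) i with hg
  have hgnn : ∀ i, 0 ≤ g i := fun i => mul_nonneg (abs_nonneg _) (Real.exp_pos _).le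
  have hgs : Summable g := by
    apply Summable.of_nonneg_of_le hgnn (fun i => ?_) ((hx m).mul_left C)
    calc |x i| * finW β (2 * k) i ≤ |x i| * (C * a i m) :=
          mul_le_mul_of_nonneg_left (hCa i) (abs_nonneg _)
      _ = C * (|x i| * a i m) := by ring
  -- split of the weight
  have hsplit : ∀ i j : ℕ, i ≤ j →
      finW β k j ≤ finW β (2 * k) (j - i) * finW β (2 * k) i := by
    intro i j hij
    unfold finW
    rw [← Real.exp_add]
    apply Real.exp_le_exp.mpr
    have h1 : β (j - i) ≤ β j := hβm (Nat.sub_le j i)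
    have h2 : β i ≤ β j := hβm hij
    have hkpos : (0 : ℝ) < (k : ℝ) := by exact_mod_cast hk
    have h2k : ((2 * k : ℕ) : ℝ) = 2 * (k : ℝ) := by push_cast; ring
    rw [h2k, ← add_div, div_le_div_iff₀ hkpos (by positivity)]
    nlinarith
  set F : ℕ → ℝ := fun j => ∑ i ∈ Finset.range (j + 1), g i * f (j - i) with hF
  have hFs : Summable F := by
    have := summable_norm_sum_mul_range_of_summable_norm (f := g) (g := f)
      (by simpa [Real.norm_eq_abs, abs_of_nonneg (hgnn _)] using hgs)
      (by simpa [Real.norm_eq_abs, abs_of_nonneg (hfnn _)] using hfs)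
    refine this.congr fun j => ?_
    rw [Real.norm_eq_abs, abs_of_nonneg]
    exact Finset.sum_nonneg fun i _ => mul_nonneg (hgnn i) (hfnn _)
  have hFtsum : ∑' j, F j = (∑' i, g i) * (∑' p, f p) := by
    symm
    exact tsum_mul_tsum_eq_tsum_sum_range_of_summable_norm (f := g) (g := f)
      (by simpa [Real.norm_eq_abs, abs_of_nonneg (hgnn _)] using hgs)
      (by simpa [Real.norm_eq_abs, abs_of_nonneg (hfnn _)] using hfs)
  have hpt : ∀ j, |hatT θ x j| * finW β k j ≤ F j := by
    intro j
    have h1 : |hatT θ x j| ≤ ∑ i ∈ Finset.range (j + 1), |θ (j - i)| * |x i| := by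
      refine (Finset.abs_sum_le_sum_abs _ _).trans ?_
      exact le_of_eq (Finset.sum_congr rfl fun i _ => abs_mul _ _)
    calc |hatT θ x j| * finW β k j
        ≤ (∑ i ∈ Finset.range (j + 1), |θ (j - i)| * |x i|) * finW β k j :=
          mul_le_mul_of_nonneg_right h1 (Real.exp_pos _).le
      _ = ∑ i ∈ Finset.range (j + 1), |θ (j - i)| * |x i| * finW β k j :=
          Finset.sum_mul _ _ _
      _ ≤ F j := by
          apply Finset.sum_le_sum
          intro i hi
          have hij : i ≤ j := Nat.lt_succ_iff.mp (Finset.mem_range.mp hi)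
          have := hsplit i j hij
          have h0 : 0 ≤ |θ (j - i)| * |x i| := mul_nonneg (abs_nonneg _) (abs_nonneg _)
          calc |θ (j - i)| * |x i| * finW β k j
              ≤ |θ (j - i)| * |x i| * (finW β (2 * k) (j - i) * finW β (2 * k) i) :=
                mul_le_mul_of_nonneg_left this h0
            _ = g i * f (j - i) := by simp only [hg, hf]; ring
  have hptnn : ∀ j, 0 ≤ |hatT θ x j| * finW β k j :=
    fun j => mul_nonneg (abs_nonneg _) (Real.exp_pos _).le
  have hSsum : Summable (fun j => |hatT θ x j| * finW β k j) :=
    Summable.of_nonneg_of_le hptnn hpt hFs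
  refine ⟨hSsum, ?_⟩
  have hgC : (∑' i, g i) ≤ C * kNorm a m x := by
    have : ∑' i, C * (|x i| * a i m) = C * kNorm a m x := by
      rw [tsum_mul_left]; rfl
    rw [← this]
    apply Summable.tsum_le_tsum _ hgs ((hx m).mul_left C)
    intro i
    calc g i ≤ |x i| * (C * a i m) := mul_le_mul_of_nonneg_left (hCa i) (abs_nonneg _)
      _ = C * (|x i| * a i m) := by ring
  have hknn : 0 ≤ kNorm a m x := tsum_nonneg fun i =>
    mul_nonneg (abs_nonneg _) (ha.nonneg i m)
  calc finNorm β k (hatT θ x) = ∑' j, |hatT θ x j| * finW β k j := rfl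
    _ ≤ ∑' j, F j := Summable.tsum_le_tsum hpt hSsum hFs
    _ = (∑' i, g i) * (∑' p, f p) := hFtsum
    _ ≤ (C * kNorm a m x) * (∑' p, f p) :=
        mul_le_mul_of_nonneg_right hgC hfnn'
    _ ≤ ((∑' p, f p) + 1) * C * kNorm a m x := by nlinarith

/-- `T̂_θ : K(a) → Λ₁(β)` (with `Λ₁(β)` nuclear) is compact iff
`θ ∈ Λ₁(β)` and there is `m` such that for all `k` there is `C > 0` with
`e^{-β_n/k} ≤ C a_{n,m}` for all `n`. -/
theorem stmt4 (a : ℕ → ℕ → ℝ) (ha : IsKotheMatrix a)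
    (β : ℕ → ℝ) (hβ0 : ∀ n, 0 ≤ β n) (hβm : Monotone β)
    (hβi : Filter.Tendsto β Filter.atTop Filter.atTop)
    (hnuc : ∀ k : ℕ, 0 < k → ∃ l, k < l ∧
      Summable fun n => Real.exp (-(β n) / (k : ℝ) + β n / (l : ℝ)))
    (θ : ℕ → ℝ) (hθ : θ 0 ≠ 0) :
    ((∀ x, InKothe a x → memFin β (hatT θ x)) ∧
      ∃ m, ∀ k : ℕ, 0 < k → ∃ C > 0, ∀ x, InKothe a x →
        finNorm β k (hatT θ x) ≤ C * kNorm a m x)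
    ↔ (memFin β θ ∧
       ∃ m, ∀ k : ℕ, 0 < k → ∃ C > 0, ∀ n, finW β k n ≤ C * a n m) := by
  constructor
  · rintro ⟨H1, m, H2⟩
    have hT0 : hatT θ (unitVec 0) = θ := by
      funext j
      simp [hatT, unitVec, mul_ite, Finset.mem_range]
    refine ⟨by simpa [hT0] using H1 _ (unitVec_inKothe a 0), m, ?_⟩
    intro k hk
    obtain ⟨C, hC, hCx⟩ := H2 k hk
    have hθp : (0 : ℝ) < |θ 0| := abs_pos.mpr hθ
    refine ⟨C / |θ 0|, div_pos hC hθp, fun n => ?_⟩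
    have hb := hCx (unitVec n) (unitVec_inKothe a n)
    have hk1 : kNorm a m (unitVec n) = a n m := by
      unfold kNorm
      rw [tsum_eq_single n]
      · simp [unitVec]
      · intro j hj; simp [unitVec, hj]
    have hsum := H1 (unitVec n) (unitVec_inKothe a n) k hk
    have hterm : hatT θ (unitVec n) n = θ 0 := by
      simp [hatT, unitVec, mul_ite, Finset.mem_range]
    have hle : |θ 0| * finW β k n ≤ finNorm β k (hatT θ (unitVec n)) := by
      have := Summable.le_tsum hsum n (fun j _ => mul_nonneg (abs_nonneg _) (Real.exp_pos _).le)
      rwa [hterm] at this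
    have hfin : |θ 0| * finW β k n ≤ C * a n m := by
      calc |θ 0| * finW β k n ≤ finNorm β k (hatT θ (unitVec n)) := hle
        _ ≤ C * kNorm a m (unitVec n) := hb
        _ = C * a n m := by rw [hk1]
    rw [div_mul_eq_mul_div, le_div_iff₀ hθp, mul_comm]
    exact hfin
  · rintro ⟨hθf, m, H⟩
    have core := stmt4_core a ha β hβ0 hβm θ hθf m H
    constructor
    · intro x hx k hk
      obtain ⟨C, hC, hCx⟩ := core k hk
      exact (hCx x hx).1
    · refine ⟨m, fun k hk => ?_⟩
      obtain ⟨C, hC, hCx⟩ := core k hk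
      exact ⟨C, hC, fun x hx => (hCx x hx).2⟩
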